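/- Let Ω ⊆ ℂ be open, let σ : Ω → ℝ be of class C² with σ(z) > 0 for all z ∈ Ω, and let F : Ω → ℂ be of class C². Suppose that ∂/∂z (σ·∂F/∂z̄) + ∂/∂z̄ (σ·∂F/∂z) = 0 on Ω (the planar form of the conductivity equation d(σ d^c F) = 0). Then the functions F₁ := √σ·∂F/∂z and F₂ := √σ·∂F/∂z̄ satisfy the first-order system ∂F₁/∂z̄ + F₂·∂(log √σ)/∂z = 0 and ∂F₂/∂z + F₁·∂(log √σ)/∂z̄ = 0 on Ω. -/

import Mathlib

open Complex MeasureTheory Filter Topology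

/-- Wirtinger derivative `∂f/∂z`. -/
noncomputable def wdz (f : ℂ → ℂ) (z : ℂ) : ℂ :=
  (1 / 2) * ((fderiv ℝ f z) 1 - Complex.I • (fderiv ℝ f z) Complex.I)

/-- Wirtinger derivative `∂f/∂z̄`. -/
noncomputable def wdzbar (f : ℂ → ℂ) (z : ℂ) : ℂ :=
  (1 / 2) * ((fderiv ℝ f z) 1 + Complex.I • (fderiv ℝ f z) Complex.I)

/-- `√σ` as a complex-valued function. -/
noncomputable def sqrtC (σ : ℂ → ℝ) (z : ℂ) : ℂ := (Real.sqrt (σ z) : ℂ)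

/-- The conductivity-type potential `Q = (√σ)_{z z̄} / √σ`. -/
noncomputable def Qpot (σ : ℂ → ℝ) (z : ℂ) : ℂ :=
  wdz (fun w => wdzbar (sqrtC σ) w) z / sqrtC σ z

/-- `g` has an `L^p` tail: `∫_{|z| ≥ 1} |g|^p dA < ∞`. -/
def HasLpTail (p : ℝ) (g : ℂ → ℂ) : Prop :=
  MeasureTheory.IntegrableOn (fun z => ‖g z‖ ^ p)
    {z : ℂ | 1 ≤ ‖z‖} MeasureTheory.volume

/-- `e_λ(z) = exp(λz - conj λ · conj z)`, a function of modulus 1. -/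
noncomputable def expPos (lam z : ℂ) : ℂ :=
  Complex.exp (lam * z - (starRingEnd ℂ) lam * (starRingEnd ℂ) z)

/-- `e_{-λ}(z) = exp(conj λ · conj z - λz)`, a function of modulus 1. -/
noncomputable def expNeg (lam z : ℂ) : ℂ :=
  Complex.exp ((starRingEnd ℂ) lam * (starRingEnd ℂ) z - lam * z)

/-- Product rule for `wdz`. -/
lemma wdz_mul (f g : ℂ → ℂ) {z : ℂ} (hf : DifferentiableAt ℝ f z)
    (hg : DifferentiableAt ℝ g z) :
    wdz (fun w => f w * g w) z = f z * wdz g z + g z * wdz f z := by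
  unfold wdz
  rw [fderiv_fun_mul hf hg]
  simp only [ContinuousLinearMap.add_apply, ContinuousLinearMap.smul_apply, smul_eq_mul]
  ring

/-- Product rule for `wdzbar`. -/
lemma wdzbar_mul (f g : ℂ → ℂ) {z : ℂ} (hf : DifferentiableAt ℝ f z)
    (hg : DifferentiableAt ℝ g z) :
    wdzbar (fun w => f w * g w) z = f z * wdzbar g z + g z * wdzbar f z := by
  unfold wdzbar
  rw [fderiv_fun_mul hf hg]
  simp only [ContinuousLinearMap.add_apply, ContinuousLinearMap.smul_apply, smul_eq_mul]
  ring

/-- Chain rule for `wdz` of a real scalar function composed with a real-valued map. -/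
lemma wdz_real_comp {u : ℂ → ℝ} {h : ℝ → ℝ} {h' : ℝ} {z : ℂ}
    (hu : DifferentiableAt ℝ u z) (hh : HasDerivAt h h' (u z)) :
    wdz (fun w => ((h (u w) : ℝ) : ℂ)) z = (h' : ℂ) * wdz (fun w => ((u w : ℝ) : ℂ)) z := by
  have H1 : HasFDerivAt (fun w => ((h (u w) : ℝ) : ℂ))
      (Complex.ofRealCLM.comp (h' • fderiv ℝ u z)) z :=
    Complex.ofRealCLM.hasFDerivAt.comp z (hh.comp_hasFDerivAt z hu.hasFDerivAt)
  have H2 : HasFDerivAt (fun w => ((u w : ℝ) : ℂ))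
      (Complex.ofRealCLM.comp (fderiv ℝ u z)) z :=
    Complex.ofRealCLM.hasFDerivAt.comp z hu.hasFDerivAt
  unfold wdz
  rw [H1.fderiv, H2.fderiv]
  simp only [ContinuousLinearMap.coe_comp', Function.comp_apply,
    ContinuousLinearMap.smul_apply, smul_eq_mul, Complex.ofRealCLM_apply]
  push_cast
  ring

/-- Chain rule for `wdzbar` of a real scalar function composed with a real-valued map. -/
lemma wdzbar_real_comp {u : ℂ → ℝ} {h : ℝ → ℝ} {h' : ℝ} {z : ℂ}
    (hu : DifferentiableAt ℝ u z) (hh : HasDerivAt h h' (u z)) :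
    wdzbar (fun w => ((h (u w) : ℝ) : ℂ)) z = (h' : ℂ) * wdzbar (fun w => ((u w : ℝ) : ℂ)) z := by
  have H1 : HasFDerivAt (fun w => ((h (u w) : ℝ) : ℂ))
      (Complex.ofRealCLM.comp (h' • fderiv ℝ u z)) z :=
    Complex.ofRealCLM.hasFDerivAt.comp z (hh.comp_hasFDerivAt z hu.hasFDerivAt)
  have H2 : HasFDerivAt (fun w => ((u w : ℝ) : ℂ))
      (Complex.ofRealCLM.comp (fderiv ℝ u z)) z :=
    Complex.ofRealCLM.hasFDerivAt.comp z hu.hasFDerivAt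
  unfold wdzbar
  rw [H1.fderiv, H2.fderiv]
  simp only [ContinuousLinearMap.coe_comp', Function.comp_apply,
    ContinuousLinearMap.smul_apply, smul_eq_mul, Complex.ofRealCLM_apply]
  push_cast
  ring

section SecondDeriv
variable {F : ℂ → ℂ} {z : ℂ}

lemma diff_fderiv (hF : ContDiffAt ℝ 2 F z) :
    DifferentiableAt ℝ (fderiv ℝ F) z :=
  (hF.fderiv_right (m := 1) (by norm_num)).differentiableAt (by norm_num)

lemma diff_wdz (hF : ContDiffAt ℝ 2 F z) :
    DifferentiableAt ℝ (fun w => wdz F w) z := by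
  have hD := diff_fderiv hF
  exact (((hD.clm_apply (differentiableAt_const 1)).sub
    ((hD.clm_apply (differentiableAt_const Complex.I)).const_smul Complex.I)).const_mul _)

lemma diff_wdzbar (hF : ContDiffAt ℝ 2 F z) :
    DifferentiableAt ℝ (fun w => wdzbar F w) z := by
  have hD := diff_fderiv hF
  exact (((hD.clm_apply (differentiableAt_const 1)).add
    ((hD.clm_apply (differentiableAt_const Complex.I)).const_smul Complex.I)).const_mul _)

/-- Equality of the mixed Wirtinger derivatives for a `C²` function. -/
lemma wdz_wdzbar_comm (hF : ContDiffAt ℝ 2 F z) :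
    wdzbar (fun w => wdz F w) z = wdz (fun w => wdzbar F w) z := by
  have hD := diff_fderiv hF
  have hval : ∀ a : ℂ, fderiv ℝ (fun w => (fderiv ℝ F w) a) z
      = (fderiv ℝ (fderiv ℝ F) z).flip a := by
    intro a
    rw [fderiv_clm_apply hD (differentiableAt_const a)]
    simp
  have h1 : ∀ a : ℂ, DifferentiableAt ℝ (fun w => (fderiv ℝ F w) a) z := fun a =>
    hD.clm_apply (differentiableAt_const a)
  have hsymm : ∀ v w : ℂ, fderiv ℝ (fderiv ℝ F) z v w = fderiv ℝ (fderiv ℝ F) z w v :=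
    hF.isSymmSndFDerivAt (by norm_num)
  have e1 : fderiv ℝ (fun w => wdz F w) z = ((1:ℂ)/2) •
      (fderiv ℝ (fun w => (fderiv ℝ F w) 1) z
        - Complex.I • fderiv ℝ (fun w => (fderiv ℝ F w) Complex.I) z) := by
    unfold wdz
    rw [fderiv_const_mul (a := fun w => (fderiv ℝ F w) 1 - Complex.I • (fderiv ℝ F w) Complex.I) ((h1 1).sub ((h1 Complex.I).const_smul Complex.I)),
      fderiv_fun_sub (g := fun w => Complex.I • (fderiv ℝ F w) Complex.I) (h1 1) ((h1 Complex.I).const_smul Complex.I),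
      fderiv_fun_const_smul (h1 Complex.I)]
  have e2 : fderiv ℝ (fun w => wdzbar F w) z = ((1:ℂ)/2) •
      (fderiv ℝ (fun w => (fderiv ℝ F w) 1) z
        + Complex.I • fderiv ℝ (fun w => (fderiv ℝ F w) Complex.I) z) := by
    unfold wdzbar
    rw [fderiv_const_mul (a := fun w => (fderiv ℝ F w) 1 + Complex.I • (fderiv ℝ F w) Complex.I) ((h1 1).add ((h1 Complex.I).const_smul Complex.I)),
      fderiv_fun_add (g := fun w => Complex.I • (fderiv ℝ F w) Complex.I) (h1 1) ((h1 Complex.I).const_smul Complex.I),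
      fderiv_fun_const_smul (h1 Complex.I)]
  rw [show wdzbar (fun w => wdz F w) z = (1/2 : ℂ) *
      ((fderiv ℝ (fun w => wdz F w) z) 1
        + Complex.I • (fderiv ℝ (fun w => wdz F w) z) Complex.I) from rfl,
    show wdz (fun w => wdzbar F w) z = (1/2 : ℂ) *
      ((fderiv ℝ (fun w => wdzbar F w) z) 1
        - Complex.I • (fderiv ℝ (fun w => wdzbar F w) z) Complex.I) from rfl,
    e1, e2]
  simp only [hval, ContinuousLinearMap.smul_apply, ContinuousLinearMap.add_apply,
    ContinuousLinearMap.sub_apply, ContinuousLinearMap.flip_apply, smul_eq_mul]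
  rw [hsymm 1 Complex.I]
  ring

end SecondDeriv

/-- Lemma 2.1, planar case: the conductivity equation for `F` implies the
first-order system (2.5) for `F₁ = √σ ∂F` and `F₂ = √σ ∂̄F`. -/
theorem conductivity_first_order_system_planar
    (Ω : Set ℂ) (hΩ : IsOpen Ω) (σ : ℂ → ℝ) (hσ : ContDiffOn ℝ 2 σ Ω)
    (hpos : ∀ z ∈ Ω, 0 < σ z) (F : ℂ → ℂ) (hF : ContDiffOn ℝ 2 F Ω)
    (heq : ∀ z ∈ Ω,
      wdz (fun w => (σ w : ℂ) * wdzbar F w) z +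
        wdzbar (fun w => (σ w : ℂ) * wdz F w) z = 0) :
    ∀ z ∈ Ω,
      (wdzbar (fun w => sqrtC σ w * wdz F w) z +
        (sqrtC σ z * wdzbar F z) *
          wdz (fun w => ((Real.log (Real.sqrt (σ w)) : ℝ) : ℂ)) z = 0) ∧
      (wdz (fun w => sqrtC σ w * wdzbar F w) z +
        (sqrtC σ z * wdz F z) *
          wdzbar (fun w => ((Real.log (Real.sqrt (σ w)) : ℝ) : ℂ)) z = 0) := by
  intro z hz
  have hnz : Ω ∈ 𝓝 z := hΩ.mem_nhds hz
  have hσz : 0 < σ z := hpos z hz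
  have hσ2 : ContDiffAt ℝ 2 σ z := hσ.contDiffAt hnz
  have hF2 : ContDiffAt ℝ 2 F z := hF.contDiffAt hnz
  have hσd : DifferentiableAt ℝ σ z := hσ2.differentiableAt (by norm_num)
  have hσcd : DifferentiableAt ℝ (fun w => ((σ w : ℝ) : ℂ)) z :=
    Complex.ofRealCLM.differentiableAt.comp z hσd
  have hsne : Real.sqrt (σ z) ≠ 0 := by positivity
  have hsqrt_deriv : HasDerivAt Real.sqrt (1 / (2 * Real.sqrt (σ z))) (σ z) :=
    Real.hasDerivAt_sqrt hσz.ne'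
  have hsd : DifferentiableAt ℝ (sqrtC σ) z := by
    have := Complex.ofRealCLM.hasFDerivAt.comp z
      (hsqrt_deriv.comp_hasFDerivAt z hσd.hasFDerivAt)
    exact this.differentiableAt
  have hlog_deriv : HasDerivAt (fun t => Real.log (Real.sqrt t)) (1 / (2 * σ z)) (σ z) := by
    have h := (Real.hasDerivAt_log hsne).comp (σ z) hsqrt_deriv
    refine h.congr_deriv ?_
    symm
    field_simp
    linear_combination Real.mul_self_sqrt hσz.le
  have hG1 : DifferentiableAt ℝ (fun w => wdz F w) z := diff_wdz hF2
  have hG2 : DifferentiableAt ℝ (fun w => wdzbar F w) z := diff_wdzbar hF2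
  have hM : wdzbar (fun w => wdz F w) z = wdz (fun w => wdzbar F w) z := wdz_wdzbar_comm hF2
  have hs_z : wdz (sqrtC σ) z
      = ((1 / (2 * Real.sqrt (σ z)) : ℝ) : ℂ) * wdz (fun w => ((σ w : ℝ) : ℂ)) z :=
    wdz_real_comp hσd hsqrt_deriv
  have hs_zb : wdzbar (sqrtC σ) z
      = ((1 / (2 * Real.sqrt (σ z)) : ℝ) : ℂ) * wdzbar (fun w => ((σ w : ℝ) : ℂ)) z :=
    wdzbar_real_comp hσd hsqrt_deriv
  have hL_z : wdz (fun w => ((Real.log (Real.sqrt (σ w)) : ℝ) : ℂ)) z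
      = ((1 / (2 * σ z) : ℝ) : ℂ) * wdz (fun w => ((σ w : ℝ) : ℂ)) z :=
    wdz_real_comp hσd hlog_deriv
  have hL_zb : wdzbar (fun w => ((Real.log (Real.sqrt (σ w)) : ℝ) : ℂ)) z
      = ((1 / (2 * σ z) : ℝ) : ℂ) * wdzbar (fun w => ((σ w : ℝ) : ℂ)) z :=
    wdzbar_real_comp hσd hlog_deriv
  have key := heq z hz
  rw [wdz_mul _ _ hσcd hG2, wdzbar_mul _ _ hσcd hG1, hM] at key
  have hs2 : (Real.sqrt (σ z) : ℂ) * (Real.sqrt (σ z) : ℂ) = ((σ z : ℝ) : ℂ) := by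
    norm_cast
    exact Real.mul_self_sqrt hσz.le
  have hsc0 : ((Real.sqrt (σ z) : ℝ) : ℂ) ≠ 0 := by exact_mod_cast hsne
  have hσc0 : ((σ z : ℝ) : ℂ) ≠ 0 := by exact_mod_cast hσz.ne'
  constructor
  · rw [wdzbar_mul _ _ hsd hG1, hL_z, hM]
    simp only [sqrtC] at *
    rw [hs_zb]
    push_cast
    field_simp
    linear_combination ((σ z : ℝ) : ℂ) * key
      + (2 * ((σ z : ℝ) : ℂ) * wdz (fun w => wdzbar F w) z + wdzbar F z * wdz (fun w => ((σ w : ℝ) : ℂ)) z) * hs2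
  · rw [wdz_mul _ _ hsd hG2, hL_zb]
    simp only [sqrtC] at *
    rw [hs_z]
    push_cast
    field_simp
    linear_combination ((σ z : ℝ) : ℂ) * key
      + (2 * ((σ z : ℝ) : ℂ) * wdz (fun w => wdzbar F w) z + wdz F z * wdzbar (fun w => ((σ w : ℝ) : ℂ)) z) * hs2
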